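/- Let T₀ : ℤ^d → ℤ^r be a ℤ-linear map. Then there exist an integer d' ≤ d, a surjective ℤ-linear map R : ℤ^d → ℤ^{d'}, an injective ℤ-linear map T : ℤ^{d'} → ℤ^r with T₀ = T ∘ R, and a constant Q > 0 such that for all positive integers q and all w ∈ ℤ^{d'} with gcd(w, q) = 1 (gcd of all coordinates of w together with q equals 1), the gcd of all coordinates of Tw together with q is at most Q. -/

import Mathlib

open Matrix

/-- An injective `ℤ`-linear map `ℤ^n → ℤ^r` admits a matrix left-quasi-inverse:
`S * (T w) = N • w` for some nonzero integer `N`. -/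
lemma aux_left_inverse {n r : ℕ} (T : (Fin n → ℤ) →ₗ[ℤ] (Fin r → ℤ))
    (hT : Function.Injective T) :
    ∃ (S : Matrix (Fin n) (Fin r) ℤ) (N : ℤ), N ≠ 0 ∧ ∀ w, S.mulVec (T w) = N • w := by
  classical
  set M := LinearMap.toMatrix' T with hMdef
  have hM : ∀ w, T w = M.mulVec w := by
    intro w
    rw [← Matrix.toLin'_apply, hMdef, Matrix.toLin'_toMatrix']
  set G := Mᵀ * M with hGdef
  have hG : G.det ≠ 0 := by
    intro h
    obtain ⟨v, hv, hGv⟩ := Matrix.exists_mulVec_eq_zero_iff.mpr h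
    have hdot : (M.mulVec v) ⬝ᵥ (M.mulVec v) = 0 := by
      have h1 : v ⬝ᵥ G.mulVec v = 0 := by rw [hGv]; simp
      rw [hGdef, ← Matrix.mulVec_mulVec, Matrix.dotProduct_mulVec,
        Matrix.vecMul_transpose] at h1
      exact h1
    have hMv : M.mulVec v = 0 := by
      funext i
      have hsum : ∑ j, (M.mulVec v) j * (M.mulVec v) j = 0 := hdot
      have := (Finset.sum_eq_zero_iff_of_nonneg
        (fun j _ => mul_self_nonneg ((M.mulVec v) j))).mp hsum i (Finset.mem_univ i)
      exact mul_self_eq_zero.mp this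
    exact hv (hT (by rw [hM, hMv, map_zero]))
  refine ⟨G.adjugate * Mᵀ, G.det, hG, fun w => ?_⟩
  rw [hM, Matrix.mulVec_mulVec, Matrix.mul_assoc, ← hGdef, Matrix.adjugate_mul,
    Matrix.smul_mulVec, Matrix.one_mulVec]

/-- GCD bound lemma: any `ℤ`-linear map `T₀ : ℤ^d → ℤ^r` factors as `T₀ = T ∘ R` with
`R` surjective onto `ℤ^{d'}` (`d' ≤ d`) and `T` injective, such that for some `Q > 0`,
for all `q > 0` and all `w ∈ ℤ^{d'}` with `gcd(w, q) = 1` we have `gcd(T w, q) ≤ Q`. -/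
theorem stmt3 (d r : ℕ) (T₀ : (Fin d → ℤ) →ₗ[ℤ] (Fin r → ℤ)) :
    ∃ (d' : ℕ) (_ : d' ≤ d) (R : (Fin d → ℤ) →ₗ[ℤ] (Fin d' → ℤ))
      (T : (Fin d' → ℤ) →ₗ[ℤ] (Fin r → ℤ)) (Q : ℕ),
      Function.Surjective R ∧ Function.Injective T ∧ T₀ = T.comp R ∧ 0 < Q ∧
      ∀ q : ℕ, 0 < q → ∀ w : Fin d' → ℤ,
        Int.gcd (Finset.univ.gcd w) (q : ℤ) = 1 →
        Int.gcd (Finset.univ.gcd (T w)) (q : ℤ) ≤ Q := by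
  classical
  set K := LinearMap.range T₀ with hK
  set d' := Module.finrank ℤ K with hd'def
  have hd' : d' ≤ d := by
    have h1 : Module.finrank ℤ K ≤ Module.finrank ℤ (Fin d → ℤ) := T₀.finrank_range_le
    simpa [hd'def] using h1
  let b : Module.Basis (Fin d') ℤ K := Module.finBasis ℤ K
  let e : K ≃ₗ[ℤ] (Fin d' → ℤ) := b.equivFun
  set R : (Fin d → ℤ) →ₗ[ℤ] (Fin d' → ℤ) := e.toLinearMap.comp T₀.rangeRestrict with hR
  set T : (Fin d' → ℤ) →ₗ[ℤ] (Fin r → ℤ) := K.subtype.comp e.symm.toLinearMap with hT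
  have hTinj : Function.Injective T := K.injective_subtype.comp e.symm.injective
  obtain ⟨S, N, hN, hS⟩ := aux_left_inverse T hTinj
  refine ⟨d', hd', R, T, N.natAbs, ?_, hTinj, ?_, Int.natAbs_pos.mpr hN, ?_⟩
  · exact e.surjective.comp T₀.surjective_rangeRestrict
  · ext x
    simp [hT, hR]
  · intro q hq w hw
    set a := Finset.univ.gcd (T w) with ha
    set g := Int.gcd a (q : ℤ) with hg
    have hga : (g : ℤ) ∣ a := Int.gcd_dvd_left _ _
    have hgq : (g : ℤ) ∣ (q : ℤ) := Int.gcd_dvd_right _ _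
    have h1 : ∀ j, (g : ℤ) ∣ N * w j := by
      intro j
      have hcoord : N * w j = ∑ i, S j i * (T w) i := by
        have := congrFun (hS w) j
        simpa [Matrix.mulVec, dotProduct, smul_eq_mul] using this.symm
      rw [hcoord]
      exact Finset.dvd_sum fun i _ =>
        Dvd.dvd.mul_left (hga.trans (Finset.gcd_dvd (Finset.mem_univ i))) _
    have h2 : (g : ℤ) ∣ (N.natAbs : ℤ) * Finset.univ.gcd w := by
      have := Finset.dvd_gcd (s := (Finset.univ : Finset (Fin d')))
        (f := fun j => N * w j) (fun j _ => h1 j)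
      rwa [Finset.gcd_mul_left, ← Int.abs_eq_normalize, Int.abs_eq_natAbs] at this
    have h3 : (g : ℤ) ∣ (N.natAbs : ℤ) * (q : ℤ) := hgq.mul_left _
    have h4 : (g : ℤ) ∣ (Int.gcd ((N.natAbs : ℤ) * Finset.univ.gcd w) ((N.natAbs : ℤ) * (q : ℤ)) : ℤ) :=
      Int.dvd_coe_gcd h2 h3
    rw [Int.gcd_mul_left, Int.natAbs_natCast, hw, mul_one] at h4
    exact Nat.le_of_dvd (Int.natAbs_pos.mpr hN) (Int.ofNat_dvd.mp h4)
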